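/- Let K ≥ 1 be an integer and let ρ ≥ 1. Define the sequence x_1 = √((ρ − 1)/ρ), x_{k+1} = √((x_k − 1)/ρ + 1), and set ζ(ρ, K) := Σ_{k=1}^{K} x_k and η(ρ, K) := 1/((2ρ − 1)(2ρ)^K) + K² 2^{−K}/(2ρ − 1) + K 2^{−K}/((2ρ − 1)² (2ρ)^K). Then the unique two-choice profile for (ρ, K) satisfies ζ(ρ, K) ≤ Σ_{k=1}^{K} ν_{ρ,K}(k) ≤ K − 1/(2ρ − 1) + η(ρ, K). -/

import Mathlib

open Finset Real

noncomputable section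

/-- Extend a vector `v = (v_0, …, v_K) ∈ ℝ^{K+1}` to `ℕ → ℝ` by zero,
implementing the convention `v_{K+1} = 0`. -/
def extProfile (K : ℕ) (v : Fin (K + 1) → ℝ) : ℕ → ℝ :=
  fun k => if h : k < K + 1 then v ⟨k, h⟩ else 0

/-- `v = (v_0, …, v_K)` is a two-choice profile for `(ρ, K)`:
`1 = v_0 ≥ v_1 ≥ … ≥ v_K ≥ 0` and, with the convention `v_{K+1} = 0`,
`v_k − v_{k+1} = ρ (v_{k−1}² − v_k²)` for every `1 ≤ k ≤ K`. -/
def IsTwoChoiceProfile (ρ : ℝ) (K : ℕ) (v : Fin (K + 1) → ℝ) : Prop :=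
  extProfile K v 0 = 1 ∧
  (∀ k < K, extProfile K v (k + 1) ≤ extProfile K v k) ∧
  0 ≤ extProfile K v K ∧
  ∀ k, 1 ≤ k → k ≤ K →
    extProfile K v k - extProfile K v (k + 1) =
      ρ * ((extProfile K v (k - 1)) ^ 2 - (extProfile K v k) ^ 2)

/-- When it exists, the unique two-choice profile for `(ρ, K)`, denoted `ν_{ρ,K}`. -/
def nu (ρ : ℝ) (K : ℕ) : Fin (K + 1) → ℝ :=
  Classical.epsilon (IsTwoChoiceProfile ρ K)

/-- `ν_{ρ,K}` viewed as a function on `ℕ` (with `ν_{ρ,K}(K+1) = 0`). -/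
def nuV (ρ : ℝ) (K : ℕ) : ℕ → ℝ := extProfile K (nu ρ K)

/-- `P(ρ, K) = (1 − ν_{ρ,K}(1)) + ν_{ρ,K}(K)`, the limiting proportion of
problematic (empty or full) queues. -/
def propProblematic (ρ : ℝ) (K : ℕ) : ℝ := (1 - nuV ρ K 1) + nuV ρ K K

/-- The sequence `x_1 = √((ρ − 1)/ρ)`, `x_{k+1} = √((x_k − 1)/ρ + 1)`,
indexed so that `xSeq ρ (k - 1) = x_k`. -/
def xSeq (ρ : ℝ) : ℕ → ℝ
  | 0 => Real.sqrt ((ρ - 1) / ρ)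
  | k + 1 => Real.sqrt ((xSeq ρ k - 1) / ρ + 1)

/-- `ζ(ρ, K) = Σ_{k=1}^K x_k`. -/
def zetaFn (ρ : ℝ) (K : ℕ) : ℝ := ∑ k ∈ Finset.range K, xSeq ρ k

/-- `η(ρ, K)`. -/
def etaFn (ρ : ℝ) (K : ℕ) : ℝ :=
  1 / ((2 * ρ - 1) * (2 * ρ) ^ K) + (K : ℝ) ^ 2 * (2 : ℝ) ^ (-(K : ℤ)) / (2 * ρ - 1) +
    (K : ℝ) * (2 : ℝ) ^ (-(K : ℤ)) / ((2 * ρ - 1) ^ 2 * (2 * ρ) ^ K)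

private lemma geom_aux (ρ : ℝ) (hρ : 1 ≤ ρ) (n : ℕ) :
    ∑ m ∈ range n, (1/(2*ρ))^(m+1) = (1 - (1/(2*ρ))^n)/(2*ρ-1) := by
  have h1 : (2*ρ) ≠ 0 := by positivity
  have h2 : (2*ρ-1) ≠ 0 := by nlinarith
  induction n with
  | zero => simp
  | succ n ih =>
    rw [Finset.sum_range_succ, ih, pow_succ]
    field_simp
    ring

private lemma sum_Icc_eq_range_rev (f : ℕ → ℝ) (K : ℕ) :
    ∑ k ∈ Icc 1 K, f k = ∑ m ∈ range K, f (K - m) := by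
  induction K with
  | zero => simp
  | succ n ih =>
    rw [Finset.sum_Icc_succ_top (by omega), ih, Finset.sum_range_succ']
    simp [Nat.succ_sub_succ]

set_option maxHeartbeats 2000000 in
/-- for `ρ ≥ 1`,
`ζ(ρ, K) ≤ Σ_{k=1}^K ν_{ρ,K}(k) ≤ K − 1/(2ρ − 1) + η(ρ, K)`. -/
theorem sum_profile_bounds_supercritical (K : ℕ) (hK : 1 ≤ K) (ρ : ℝ) (hρ : 1 ≤ ρ)
    (v : Fin (K + 1) → ℝ) (hv : IsTwoChoiceProfile ρ K v) :
    zetaFn ρ K ≤ ∑ k ∈ Finset.Icc 1 K, extProfile K v k ∧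
    ∑ k ∈ Finset.Icc 1 K, extProfile K v k ≤ (K : ℝ) - 1 / (2 * ρ - 1) + etaFn ρ K := by
  obtain ⟨hV0, hmono, hVK0, hrec⟩ := hv
  set V : ℕ → ℝ := extProfile K v with hVdef
  have hρ0 : (0:ℝ) < ρ := by linarith
  have h2ρ : (0:ℝ) < 2*ρ := by linarith
  have h2ρ1 : (0:ℝ) < 2*ρ - 1 := by linarith
  have hVK1 : V (K+1) = 0 := by
    simp only [hVdef, extProfile]
    rw [dif_neg (by omega)]
  -- monotonicity consequences
  have hanti : ∀ n, n ≤ K → ∀ j, j ≤ n → V n ≤ V j := by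
    intro n
    induction n with
    | zero =>
      intro _ j hj
      have hj0 : j = 0 := by omega
      subst hj0; exact le_rfl
    | succ n ih =>
      intro hn j hj
      have h1 : V (n+1) ≤ V n := hmono n (by omega)
      rcases Nat.lt_or_ge j (n+1) with h | h
      · exact le_trans h1 (ih (by omega) j (by omega))
      · have hj1 : j = n+1 := by omega
        subst hj1; exact le_rfl
  have hVle1 : ∀ k, k ≤ K → V k ≤ 1 := by
    intro k hk
    calc V k ≤ V 0 := hanti k hk 0 (Nat.zero_le _)
    _ = 1 := hV0
  have hVnn : ∀ k, k ≤ K → 0 ≤ V k := fun k hk => le_trans hVK0 (hanti K le_rfl k hk)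
  -- the summed recursion : V k = ρ (V (k-1)² − V K²)
  have hD2m : ∀ m, m < K → V (K-m) = ρ * (V (K-m-1)^2 - V K^2) := by
    intro m
    induction m with
    | zero =>
      intro _
      have h := hrec K (by omega) le_rfl
      rw [hVK1] at h
      simpa using h
    | succ m ih =>
      intro hm1
      have hm : m < K := by omega
      have e := hrec (K-m-1) (by omega) (by omega)
      have hstep : K-m-1+1 = K-m := by omega
      rw [hstep] at e
      have h2 := ih hm
      simp only [show K-(m+1) = K-m-1 from by omega]
      linear_combination e + h2
  have hD2 : ∀ k, 1 ≤ k → k ≤ K → V k = ρ * (V (k-1)^2 - V K^2) := by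
    intro k h1 h2
    have h := hD2m (K-k) (by omega)
    simpa only [show K-(K-k) = k from by omega] using h
  -- c and basic facts
  have hV1K : V 1 = ρ * (1 - V K^2) := by
    have h := hD2 1 le_rfl hK
    simpa [hV0] using h
  set c : ℝ := 1 - V 1 with hcdef
  have hc0 : 0 ≤ c := by
    have := hVle1 1 hK
    simp only [hcdef]; linarith
  have hc1 : c ≤ 1 := by
    have := hVnn 1 hK
    simp only [hcdef]; linarith
  have hρK2 : ρ * V K^2 = ρ - 1 + c := by
    simp only [hcdef]; linarith [hV1K]
  have hVK2 : (ρ-1)/ρ ≤ V K^2 := by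
    rw [div_le_iff₀ hρ0]
    nlinarith [hρK2]
  -- lower bound chain
  have hL3 : ∀ m, m < K → xSeq ρ m ≤ V (K-m) := by
    intro m
    induction m with
    | zero =>
      intro _
      have h1 : Real.sqrt ((ρ-1)/ρ) ≤ Real.sqrt (V K^2) := Real.sqrt_le_sqrt hVK2
      rw [Real.sqrt_sq (hVnn K le_rfl)] at h1
      simpa [xSeq] using h1
    | succ m ih =>
      intro hm1
      have hm : m < K := by omega
      have ihm := ih hm
      have hD := hD2 (K-m) (by omega) (by omega)
      have harg : (xSeq ρ m - 1)/ρ + 1 ≤ V (K-m-1)^2 := by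
        have h1 : (xSeq ρ m - 1)/ρ + 1 ≤ (V (K-m) - 1)/ρ + 1 := by
          gcongr
        have h2 : (V (K-m) - 1)/ρ + 1 ≤ V (K-m-1)^2 := by
          rw [div_add' _ _ _ (ne_of_gt hρ0), div_le_iff₀ hρ0]
          nlinarith [hD, hVK2, mul_pos hρ0 hρ0]
        linarith
      have hnn : 0 ≤ V (K-m-1) := hVnn _ (by omega)
      have : xSeq ρ (m+1) ≤ Real.sqrt (V (K-m-1)^2) := by
        show Real.sqrt ((xSeq ρ m - 1)/ρ + 1) ≤ _
        exact Real.sqrt_le_sqrt harg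
      rw [Real.sqrt_sq hnn] at this
      simpa only [show K-(m+1) = K-m-1 from by omega] using this
  -- lower bound on the sum
  have hlow : ∑ m ∈ range K, xSeq ρ m ≤ ∑ k ∈ Icc 1 K, V k := by
    rw [sum_Icc_eq_range_rev V K]
    refine Finset.sum_le_sum ?_
    intro m hm
    exact hL3 m (Finset.mem_range.mp hm)
  -- upper bound machinery
  have hU1 : ∀ k, 1 ≤ k → k ≤ K+1 → 1 - V k = ρ * (1 - V (k-1)^2) + c := by
    intro k h1 h2
    rcases Nat.lt_or_ge k (K+1) with h | h
    · have hD := hD2 k h1 (by omega)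
      rw [hD]
      linarith [hρK2]
    · have hk1 : k = K+1 := by omega
      subst hk1
      rw [hVK1]
      simp only [Nat.add_sub_cancel]
      linarith [hρK2]
  have hU2 : ∀ m, m ≤ K → (1/(2*ρ))^m - c/(2*ρ-1) ≤ 1 - V (K+1-m) := by
    intro m
    induction m with
    | zero =>
      intro _
      simp only [pow_zero, Nat.sub_zero, hVK1]
      have : 0 ≤ c/(2*ρ-1) := div_nonneg hc0 (le_of_lt h2ρ1)
      linarith
    | succ m ih =>
      intro hm1
      have ihm := ih (by omega)
      have hk := hU1 (K+1-m) (by omega) (by omega)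
      have hidx : K+1-m-1 = K+1-(m+1) := by omega
      rw [hidx] at hk
      set y := V (K+1-(m+1)) with hy
      have hH : (1/(2*ρ))^m - c/(2*ρ-1) - c ≤ 2*ρ*(1 - y) := by
        have hsq : ρ*(1 - y^2) ≤ 2*ρ*(1-y) := by nlinarith [mul_nonneg (le_of_lt hρ0) (sq_nonneg (1 - y))]
        linarith [ihm, hk]
      have key : (1/(2*ρ))^(m+1) - c/(2*ρ-1)
          = ((1/(2*ρ))^m - c/(2*ρ-1) - c)/(2*ρ) := by
        rw [pow_succ]
        field_simp
        ring
      rw [key, div_le_iff₀ h2ρ]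
      linarith [hH]
  -- the chain c ≤ V(K-m)^(2^(m+1))
  have hchain : ∀ m, m < K → c ≤ (V (K-m))^(2^(m+1)) := by
    intro m
    induction m with
    | zero =>
      intro _
      have h1 : c ≤ V K ^ 2 := by
        nlinarith [hρK2, hVle1 K le_rfl, hVnn K le_rfl]
      simpa using h1
    | succ m ih =>
      intro hm1
      have ihm := ih (by omega)
      have hD := hD2 (K-m) (by omega) (by omega)
      have hsq : V (K-m) ≤ V (K-m-1)^2 := by
        have hle : V (K-m-1)^2 ≤ 1 := by
          nlinarith [hVle1 (K-m-1) (by omega), hVnn (K-m-1) (by omega)]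
        have prod : 0 ≤ (ρ-1)*(1 - V (K-m-1)^2) := mul_nonneg (by linarith) (by linarith)
        nlinarith [hD, hρK2, hc0, prod]
      have h2 : (V (K-m))^(2^(m+1)) ≤ (V (K-m-1)^2)^(2^(m+1)) :=
        pow_le_pow_left₀ (hVnn (K-m) (by omega)) hsq _
      have h3 : (V (K-m-1)^2)^(2^(m+1)) = (V (K-m-1))^(2^(m+2)) := by
        rw [← pow_mul]
        congr 1
        rw [pow_succ 2 (m+1)]
        ring
      rw [h3] at h2
      simp only [show K-(m+1) = K-m-1 from by omega]
      exact le_trans ihm h2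
  -- c ≤ K / 2^K
  have hV1c : V 1 = 1 - c := by simp only [hcdef]; ring
  have hcK : c ≤ (K:ℝ) * ((2:ℝ)^K)⁻¹ := by
    have h1 : c ≤ (1-c)^(2^K) := by
      have h := hchain (K-1) (by omega)
      simp only [show K-(K-1) = 1 from by omega, show K-1+1 = K from by omega, hV1c] at h
      exact h
    have h2 : (1-c)^(2^K) ≤ Real.exp (-c) ^ (2^K) :=
      pow_le_pow_left₀ (by linarith) (by linarith [Real.add_one_le_exp (-c)]) _
    have h3 : Real.exp (-c) ^ (2^K : ℕ) = Real.exp (-(c * (2:ℝ)^K)) := by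
      rw [← Real.exp_nat_mul]
      congr 1
      push_cast
      ring
    by_contra hcon
    push_neg at hcon
    have h2K : (0:ℝ) < (2:ℝ)^K := by positivity
    have hKc : (1:ℝ) ≤ (K:ℝ) := by exact_mod_cast hK
    have hcK' : (K:ℝ) < c * (2:ℝ)^K := by
      have h := mul_lt_mul_of_pos_right hcon h2K
      rwa [mul_assoc, inv_mul_cancel₀ (ne_of_gt h2K), mul_one] at h
    have h4 : Real.exp (-(c * (2:ℝ)^K)) < Real.exp (-(K:ℝ)) :=
      Real.exp_lt_exp.mpr (by linarith)
    have h5 : Real.exp (-(K:ℝ)) ≤ ((2:ℝ)^K)⁻¹ := by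
      rw [Real.exp_neg]
      have h6 : (2:ℝ)^K ≤ Real.exp (K:ℝ) := by
        have : (2:ℝ) ≤ Real.exp 1 := by linarith [Real.add_one_le_exp 1]
        calc (2:ℝ)^K ≤ Real.exp 1 ^ K := pow_le_pow_left₀ (by norm_num) this K
        _ = Real.exp (K:ℝ) := by rw [← Real.exp_nat_mul]; simp
      exact inv_anti₀ h2K h6
    have : c < c := by
      calc c ≤ (1-c)^(2^K) := h1
      _ ≤ Real.exp (-c) ^ (2^K) := h2
      _ = Real.exp (-(c * (2:ℝ)^K)) := h3
      _ < Real.exp (-(K:ℝ)) := h4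
      _ ≤ ((2:ℝ)^K)⁻¹ := h5
      _ ≤ (K:ℝ) * ((2:ℝ)^K)⁻¹ := le_mul_of_one_le_left (inv_nonneg.mpr h2K.le) hKc
      _ < c := hcon
    exact absurd this (lt_irrefl c)
  -- assembling the upper bound
  have hEq : ∑ k ∈ Icc 1 K, (1 - V k) = K - ∑ k ∈ Icc 1 K, V k := by
    rw [Finset.sum_sub_distrib, Finset.sum_const, Nat.card_Icc]
    simp [nsmul_eq_mul]
  have hup1 : (1 - (1/(2*ρ))^K)/(2*ρ-1) - K*(c/(2*ρ-1)) ≤ ∑ k ∈ Icc 1 K, (1 - V k) := by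
    rw [sum_Icc_eq_range_rev (fun k => 1 - V k) K]
    have hterm : ∀ m ∈ range K, (1/(2*ρ))^(m+1) - c/(2*ρ-1) ≤ 1 - V (K-m) := by
      intro m hm
      have hmK : m < K := Finset.mem_range.mp hm
      have h := hU2 (m+1) (by omega)
      simpa only [show K+1-(m+1) = K-m from by omega] using h
    calc (1 - (1/(2*ρ))^K)/(2*ρ-1) - K*(c/(2*ρ-1))
        = ∑ m ∈ range K, ((1/(2*ρ))^(m+1) - c/(2*ρ-1)) := by
          rw [Finset.sum_sub_distrib, geom_aux ρ hρ K, Finset.sum_const, Finset.card_range]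
          simp [nsmul_eq_mul]
      _ ≤ ∑ m ∈ range K, (1 - V (K-m)) := Finset.sum_le_sum hterm
  have h2ρK : ((2:ℝ)*ρ)^K ≠ 0 := by positivity
  have h2ρ1ne : (2*ρ-1) ≠ 0 := ne_of_gt h2ρ1
  have e1 : (1 - (1/(2*ρ))^K)/(2*ρ-1) = 1/(2*ρ-1) - 1/((2*ρ-1)*(2*ρ)^K) := by
    rw [div_pow, one_pow, sub_div, div_div, mul_comm (((2:ℝ)*ρ)^K) (2*ρ-1)]
  have e2 : (2:ℝ)^(-(K:ℤ)) = ((2:ℝ)^K)⁻¹ := by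
    rw [zpow_neg, zpow_natCast]
  have hη3 : 0 ≤ (K:ℝ) * ((2:ℝ)^K)⁻¹ / ((2*ρ-1)^2 * (2*ρ)^K) := by positivity
  have hKcdiv : (K:ℝ)*(c/(2*ρ-1)) ≤ (K:ℝ)^2*((2:ℝ)^K)⁻¹/(2*ρ-1) := by
    calc (K:ℝ)*(c/(2*ρ-1)) ≤ (K:ℝ)*(((K:ℝ)*((2:ℝ)^K)⁻¹)/(2*ρ-1)) := by
          gcongr
      _ = (K:ℝ)^2*((2:ℝ)^K)⁻¹/(2*ρ-1) := by ring
  have hupper : ∑ k ∈ Icc 1 K, V k ≤ (K:ℝ) - 1/(2*ρ-1) + etaFn ρ K := by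
    rw [etaFn, e2]
    linarith [hEq, hup1, e1, hKcdiv, hη3]
  exact ⟨hlow, hupper⟩
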